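/- Let k ≥ 1 be an integer, λ > 0, α ∈ (0,1), and let q_{α,k}(n,t) = ∑_{r=0}^∞ ((−(kλ)^α t)^r / r!) · ∑_{x ∈ Ω(k,n)} (−1)^{ζ(x)} (∏_{l=0}^{ζ(x)−1}(αr − l)) / (Π!(x) · k^{ζ(x)}) be the probability mass function of the space-fractional Poisson process of order k. Then for every n ≥ 0 and t > 0, (d/dt) q_{α,k}(n,t) = −(kλ)^α ∑_{x} (−1)^{ζ(x)} (∏_{l=0}^{ζ(x)−1}(α − l)) / (Π!(x) · k^{ζ(x)}) · q_{α,k}(n − w(x), t), where the (finite) sum ranges over all tuples x = (x₁,…,x_k) of non-negative integers with weight w(x) = x₁ + 2x₂ + ⋯ + kx_k ≤ n. This is the differential–difference equation (d/dt)q = −k^α λ^α (1 − (1/k)∑_{j=1}^k B^j)^α q, where B is the backward shift operator and terms shifting below index 0 vanish. -/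

import Mathlib

open scoped BigOperators

/-- `Omega k n` is the (finite) set of tuples `(x₁,…,x_k)` of non-negative integers with
`x₁ + 2·x₂ + ⋯ + k·x_k = n`. -/
def Omega (k n : ℕ) : Finset (Fin k → ℕ) :=
  (Fintype.piFinset fun _ => Finset.range (n + 1)).filter
    (fun x => ∑ i, (i.1 + 1) * x i = n)

/-- `ζ(x) = x₁ + ⋯ + x_k`. -/
def zeta {k : ℕ} (x : Fin k → ℕ) : ℕ := ∑ i, x i

/-- `Π!(x) = x₁! ⋯ x_k!`. -/
def pifact {k : ℕ} (x : Fin k → ℕ) : ℕ := ∏ i, (x i).factorial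

/-- `c_k(n, y) = ∑_{x ∈ Ω(k,n)} y^{ζ(x)} / Π!(x)`. -/
noncomputable def ck (k n : ℕ) (y : ℝ) : ℝ :=
  ∑ x ∈ Omega k n, y ^ zeta x / (pifact x : ℝ)

/-- The pmf of the space-fractional Poisson process of order `k`. -/
noncomputable def qk (k : ℕ) (lam α : ℝ) (n : ℕ) (t : ℝ) : ℝ :=
  ∑' r : ℕ, ((-((k * lam) ^ α) * t) ^ r / r.factorial) *
    ∑ x ∈ Omega k n,
      (-1 : ℝ) ^ zeta x * (∏ l ∈ Finset.range (zeta x), (α * r - l)) /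
        ((pifact x : ℝ) * (k : ℝ) ^ zeta x)

open Finset Polynomial

noncomputable def u (k : ℕ) : Polynomial ℝ :=
  ∑ a : Fin k, Polynomial.C ((k : ℝ)⁻¹) * Polynomial.X ^ (a.1 + 1)

lemma coeff_u_pow_eq_zero (k : ℕ) {i n : ℕ} (h : n < i) : ((u k) ^ i).coeff n = 0 := by
  have hu : u k = (∑ a : Fin k, Polynomial.C ((k : ℝ)⁻¹) * Polynomial.X ^ a.1) * Polynomial.X := by
    rw [u, Finset.sum_mul]
    exact Finset.sum_congr rfl fun a _ => by rw [mul_assoc, ← pow_succ]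
  rw [hu, mul_pow, Polynomial.coeff_mul_X_pow', if_neg (by omega)]

lemma mem_Omega {k n : ℕ} {x : Fin k → ℕ} :
    x ∈ Omega k n ↔ ∑ i, (i.1 + 1) * x i = n := by
  constructor
  · intro hx; exact (Finset.mem_filter.mp hx).2
  · intro hx
    refine Finset.mem_filter.mpr ⟨Fintype.mem_piFinset.mpr fun a => ?_, hx⟩
    refine Finset.mem_range.mpr (Nat.lt_succ_of_le ?_)
    calc x a ≤ (a.1 + 1) * x a := Nat.le_mul_of_pos_left _ (Nat.succ_pos _)
    _ ≤ ∑ i, (i.1 + 1) * x i := Finset.single_le_sum (f := fun i : Fin k => (i.1 + 1) * x i) (fun i _ => Nat.zero_le _) (Finset.mem_univ a)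
    _ = n := hx

lemma zeta_le {k n : ℕ} {x : Fin k → ℕ} (hx : x ∈ Omega k n) : zeta x ≤ n := by
  rw [mem_Omega] at hx
  calc zeta x = ∑ i, x i := rfl
  _ ≤ ∑ i, (i.1 + 1) * x i := Finset.sum_le_sum fun i _ => Nat.le_mul_of_pos_left _ (Nat.succ_pos _)
  _ = n := hx

lemma filter_Omega_eq (k n i : ℕ) :
    (Finset.univ.piAntidiag i).filter (fun f : Fin k → ℕ => ∑ a, (a.1 + 1) * f a = n) =
      (Omega k n).filter (fun x => zeta x = i) := by
  ext f
  simp only [Finset.mem_filter, Finset.mem_piAntidiag, mem_Omega]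
  constructor
  · rintro ⟨⟨hsum, -⟩, hw⟩; exact ⟨hw, hsum⟩
  · rintro ⟨hw, hsum⟩; exact ⟨⟨hsum, fun a _ => Finset.mem_univ a⟩, hw⟩

lemma coeff_u_pow (k : ℕ) (i n : ℕ) :
    ((u k) ^ i).coeff n =
      ((k : ℝ)⁻¹) ^ i * ∑ x ∈ (Omega k n).filter (fun x => zeta x = i),
        ((i.factorial : ℝ) / (pifact x : ℝ)) := by
  rw [u, Finset.sum_pow_eq_sum_piAntidiag]
  rw [Polynomial.finset_sum_coeff]
  have hterm : ∀ f ∈ Finset.univ.piAntidiag i,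
      ((Nat.multinomial Finset.univ f : Polynomial ℝ) *
        ∏ a : Fin k, (Polynomial.C ((k : ℝ)⁻¹) * Polynomial.X ^ (a.1 + 1)) ^ f a).coeff n =
      if ∑ a, (a.1 + 1) * f a = n then
        (Nat.multinomial Finset.univ f : ℝ) * ((k : ℝ)⁻¹) ^ i else 0 := by
    intro f hf
    obtain ⟨hsum, -⟩ := Finset.mem_piAntidiag.mp hf
    have : ∏ a : Fin k, (Polynomial.C ((k : ℝ)⁻¹) * Polynomial.X ^ (a.1 + 1)) ^ f a =
        Polynomial.C (((k : ℝ)⁻¹) ^ i) * Polynomial.X ^ (∑ a, (a.1 + 1) * f a) := by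
      simp only [mul_pow, ← pow_mul, ← Polynomial.C_pow]
      rw [Finset.prod_mul_distrib]
      congr 1
      · rw [← map_prod, Finset.prod_pow_eq_pow_sum, hsum]
      · rw [Finset.prod_pow_eq_pow_sum]
    rw [this, ← Polynomial.C_eq_natCast, ← mul_assoc, ← Polynomial.C_mul,
      Polynomial.coeff_C_mul, Polynomial.coeff_X_pow]
    by_cases h : ∑ a, (a.1 + 1) * f a = n
    · rw [if_pos h, if_pos h.symm, mul_one]
    · rw [if_neg h, if_neg (fun hh => h hh.symm), mul_zero]
  rw [Finset.sum_congr rfl hterm, ← Finset.sum_filter, filter_Omega_eq, Finset.mul_sum]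
  refine Finset.sum_congr rfl fun x hx => ?_
  obtain ⟨-, hz⟩ := Finset.mem_filter.mp hx
  have hspec : (pifact x) * Nat.multinomial Finset.univ x = i.factorial := by
    rw [pifact, Nat.multinomial_spec]
    exact congrArg Nat.factorial hz
  have hne : (pifact x : ℝ) ≠ 0 :=
    Nat.cast_ne_zero.mpr (Finset.prod_pos fun a _ => (x a).factorial_pos).ne'
  have : (Nat.multinomial Finset.univ x : ℝ) = (i.factorial : ℝ) / (pifact x : ℝ) := by
    rw [eq_div_iff hne, mul_comm]
    exact_mod_cast congrArg (Nat.cast : ℕ → ℝ) hspec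
  rw [this, mul_comm]

noncomputable def P (β : ℝ) (i : ℕ) : ℝ :=
  (-1 : ℝ) ^ i * (∏ l ∈ Finset.range i, (β - l)) / i.factorial

lemma descPoch_real (β : ℝ) (i : ℕ) :
    (descPochhammer ℤ i).smeval β = ∏ l ∈ Finset.range i, (β - l) := by
  induction i with
  | zero => simp [descPochhammer_zero, Polynomial.smeval_one]
  | succ m ih =>
      rw [descPochhammer_succ_right, Polynomial.smeval_mul, ih, Finset.prod_range_succ]
      congr 1
      simp [Polynomial.smeval_sub, Polynomial.smeval_X, Polynomial.smeval_natCast]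

lemma ringChoose_eq (β : ℝ) (i : ℕ) :
    Ring.choose β i = (∏ l ∈ Finset.range i, (β - l)) / i.factorial := by
  have h := Ring.descPochhammer_eq_factorial_smul_choose β i
  rw [descPoch_real] at h
  rw [h, nsmul_eq_mul, mul_comm, mul_div_assoc, div_self, mul_one]
  exact_mod_cast i.factorial_ne_zero

lemma P_eq (β : ℝ) (i : ℕ) : P β i = (-1 : ℝ) ^ i * Ring.choose β i := by
  rw [ringChoose_eq, P, mul_div_assoc]

lemma P_vandermonde (β γ : ℝ) (s : ℕ) :
    ∑ p ∈ Finset.HasAntidiagonal.antidiagonal s, P β p.1 * P γ p.2 = P (β + γ) s := by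
  rw [P_eq, Ring.add_choose_eq s (Commute.all β γ), Finset.mul_sum]
  refine Finset.sum_congr rfl fun p hp => ?_
  rw [P_eq, P_eq]
  have : p.1 + p.2 = s := Finset.HasAntidiagonal.mem_antidiagonal.mp hp
  rw [← this, pow_add]
  ring

noncomputable def A (k : ℕ) (β : ℝ) (n : ℕ) : ℝ :=
  ∑ x ∈ Omega k n, (-1 : ℝ) ^ zeta x * (∏ l ∈ Finset.range (zeta x), (β - l)) /
    ((pifact x : ℝ) * (k : ℝ) ^ zeta x)

lemma A_eq_sum (k : ℕ) (β : ℝ) (n : ℕ) :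
    A k β n = ∑ i ∈ Finset.range (n + 1), P β i * ((u k) ^ i).coeff n := by
  rw [A, ← Finset.sum_fiberwise_of_maps_to (g := zeta) (t := Finset.range (n + 1))
    (fun x hx => Finset.mem_range.mpr (Nat.lt_succ_of_le (zeta_le hx)))]
  refine Finset.sum_congr rfl fun i _ => ?_
  rw [coeff_u_pow, P, Finset.mul_sum, Finset.mul_sum]
  refine Finset.sum_congr rfl fun x hx => ?_
  obtain ⟨-, hz⟩ := Finset.mem_filter.mp hx
  have hne : (pifact x : ℝ) ≠ 0 :=
    Nat.cast_ne_zero.mpr (Finset.prod_pos fun a _ => (x a).factorial_pos).ne'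
  have hfac : (i.factorial : ℝ) ≠ 0 := Nat.cast_ne_zero.mpr i.factorial_ne_zero
  rw [hz]
  field_simp
  ring

lemma A_eq_sum' (k : ℕ) (β : ℝ) {m n : ℕ} (h : m ≤ n) :
    A k β m = ∑ i ∈ Finset.range (n + 1), P β i * ((u k) ^ i).coeff m := by
  rw [A_eq_sum]
  refine Finset.sum_subset (by intro i hi; simp only [Finset.mem_range] at *; omega) ?_
  intro i hi hni
  simp only [Finset.mem_range] at hi hni
  rw [coeff_u_pow_eq_zero k (by omega), mul_zero]

lemma A_conv (k : ℕ) (β γ : ℝ) (n : ℕ) :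
    A k (β + γ) n = ∑ m ∈ Finset.range (n + 1), A k β m * A k γ (n - m) := by
  have step1 : ∑ m ∈ Finset.range (n + 1), A k β m * A k γ (n - m) =
      ∑ p ∈ Finset.HasAntidiagonal.antidiagonal n, A k β p.1 * A k γ p.2 := by
    rw [Finset.Nat.sum_antidiagonal_eq_sum_range_succ_mk]
  rw [step1]
  have step2 : ∀ p ∈ Finset.HasAntidiagonal.antidiagonal n, A k β p.1 * A k γ p.2 =
      ∑ i ∈ Finset.range (n + 1), ∑ j ∈ Finset.range (n + 1),
        P β i * P γ j * (((u k) ^ i).coeff p.1 * ((u k) ^ j).coeff p.2) := by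
    intro p hp
    have hpn := Finset.HasAntidiagonal.mem_antidiagonal.mp hp
    rw [A_eq_sum' k β (le_of_add_le_left hpn.le), A_eq_sum' k γ (le_of_add_le_right hpn.le),
      Finset.sum_mul_sum]
    exact Finset.sum_congr rfl fun i _ => Finset.sum_congr rfl fun j _ => by ring
  rw [Finset.sum_congr rfl step2]
  calc A k (β + γ) n
      = ∑ s ∈ Finset.range (n + 1), P (β + γ) s * ((u k) ^ s).coeff n := A_eq_sum k _ n
    _ = ∑ s ∈ Finset.range (n + 1), ∑ p ∈ Finset.HasAntidiagonal.antidiagonal s,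
          P β p.1 * P γ p.2 * ((u k) ^ (p.1 + p.2)).coeff n := by
        refine Finset.sum_congr rfl fun s hs => ?_
        rw [← P_vandermonde, Finset.sum_mul]
        refine Finset.sum_congr rfl fun p hp => ?_
        rw [Finset.HasAntidiagonal.mem_antidiagonal.mp hp]
    _ = ∑ x ∈ (Finset.range (n + 1)).sigma (fun s => Finset.HasAntidiagonal.antidiagonal s),
          P β x.2.1 * P γ x.2.2 * ((u k) ^ (x.2.1 + x.2.2)).coeff n := by
        rw [Finset.sum_sigma]
    _ = ∑ p ∈ ((Finset.range (n + 1)) ×ˢ (Finset.range (n + 1))).filter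
          (fun p : ℕ × ℕ => p.1 + p.2 ≤ n),
          P β p.1 * P γ p.2 * ((u k) ^ (p.1 + p.2)).coeff n := by
        refine Finset.sum_nbij' (i := fun x => x.2) (j := fun p => ⟨p.1 + p.2, p⟩)
          ?_ ?_ ?_ ?_ ?_
        · rintro ⟨s, p⟩ hx
          simp only [Finset.mem_sigma, Finset.mem_range, Finset.HasAntidiagonal.mem_antidiagonal] at hx
          simp only [Finset.mem_filter, Finset.mem_product, Finset.mem_range]
          omega
        · rintro p hp
          simp only [Finset.mem_filter, Finset.mem_product, Finset.mem_range] at hp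
          simp only [Finset.mem_sigma, Finset.mem_range, Finset.HasAntidiagonal.mem_antidiagonal]
          exact ⟨by omega, trivial⟩
        · rintro ⟨s, p⟩ hx
          simp only [Finset.mem_sigma, Finset.mem_range, Finset.HasAntidiagonal.mem_antidiagonal] at hx
          simp [hx.2]
        · intro p hp; rfl
        · intro x hx; rfl
    _ = ∑ p ∈ (Finset.range (n + 1)) ×ˢ (Finset.range (n + 1)),
          P β p.1 * P γ p.2 * ((u k) ^ (p.1 + p.2)).coeff n := by
        refine Finset.sum_subset (Finset.filter_subset _ _) ?_
        intro p hp hnp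
        simp only [Finset.mem_filter, hp, true_and, not_le] at hnp
        rw [coeff_u_pow_eq_zero k hnp, mul_zero]
    _ = ∑ i ∈ Finset.range (n + 1), ∑ j ∈ Finset.range (n + 1),
          P β i * P γ j * ((u k) ^ (i + j)).coeff n := by rw [Finset.sum_product]
    _ = ∑ i ∈ Finset.range (n + 1), ∑ j ∈ Finset.range (n + 1),
          ∑ p ∈ Finset.HasAntidiagonal.antidiagonal n,
            P β i * P γ j * (((u k) ^ i).coeff p.1 * ((u k) ^ j).coeff p.2) := by
        refine Finset.sum_congr rfl fun i _ => Finset.sum_congr rfl fun j _ => ?_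
        rw [pow_add, Polynomial.coeff_mul, Finset.mul_sum]
    _ = ∑ p ∈ Finset.HasAntidiagonal.antidiagonal n, ∑ i ∈ Finset.range (n + 1), ∑ j ∈ Finset.range (n + 1),
          P β i * P γ j * (((u k) ^ i).coeff p.1 * ((u k) ^ j).coeff p.2) := by
        exact Eq.trans (Finset.sum_congr rfl fun i _ => Finset.sum_comm) Finset.sum_comm

lemma pifact_one_le {k : ℕ} (x : Fin k → ℕ) : (1 : ℝ) ≤ (pifact x : ℝ) :=
  Nat.one_le_cast.mpr (Nat.one_le_iff_ne_zero.mpr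
    (Finset.prod_pos fun a _ => (x a).factorial_pos).ne')

lemma abs_A_le {k : ℕ} (hk : 1 ≤ k) {β B : ℝ} (hB : 0 ≤ B) (hβ : |β| ≤ B) (n : ℕ) :
    |A k β n| ≤ (Omega k n).card * (B + n + 1) ^ n := by
  have hbase : (1 : ℝ) ≤ B + n + 1 := by have : (0:ℝ) ≤ (n:ℝ) := Nat.cast_nonneg n; linarith
  have hterm : ∀ x ∈ Omega k n,
      |(-1 : ℝ) ^ zeta x * (∏ l ∈ Finset.range (zeta x), (β - l)) /
        ((pifact x : ℝ) * (k : ℝ) ^ zeta x)| ≤ (B + n + 1) ^ n := by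
    intro x hx
    have hk1 : (1 : ℝ) ≤ (k : ℝ) := by exact_mod_cast hk
    have h1 : (1 : ℝ) ≤ (pifact x : ℝ) := pifact_one_le x
    have h2 : (1 : ℝ) ≤ (k : ℝ) ^ zeta x := one_le_pow₀ hk1
    have hden : (1 : ℝ) ≤ (pifact x : ℝ) * (k : ℝ) ^ zeta x := by nlinarith
    have hnum : |∏ l ∈ Finset.range (zeta x), (β - (l : ℝ))| ≤ (B + n + 1) ^ (zeta x) := by
      rw [Finset.abs_prod]
      calc ∏ l ∈ Finset.range (zeta x), |β - (l : ℝ)|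
          ≤ ∏ _l ∈ Finset.range (zeta x), (B + n + 1) := by
            refine Finset.prod_le_prod (fun _ _ => abs_nonneg _) (fun l hl => ?_)
            have hl' : (l : ℝ) ≤ n := by
              have h3 := Finset.mem_range.mp hl
              have h4 := zeta_le hx
              exact_mod_cast Nat.le_of_lt_succ (by omega)
            calc |β - (l : ℝ)| ≤ |β| + |(l : ℝ)| := abs_sub _ _
              _ ≤ B + n + 1 := by
                  rw [abs_of_nonneg (by positivity : (0:ℝ) ≤ (l:ℝ))]; linarith
        _ = (B + n + 1) ^ zeta x := by rw [Finset.prod_const, Finset.card_range]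
    rw [abs_div, abs_mul, abs_pow, abs_neg, abs_one, one_pow, one_mul,
      abs_of_pos (by linarith : (0:ℝ) < (pifact x : ℝ) * (k : ℝ) ^ zeta x)]
    calc |∏ l ∈ Finset.range (zeta x), (β - (l:ℝ))| / ((pifact x : ℝ) * (k : ℝ) ^ zeta x)
        ≤ |∏ l ∈ Finset.range (zeta x), (β - (l:ℝ))| := div_le_self (abs_nonneg _) hden
      _ ≤ (B + n + 1) ^ zeta x := hnum
      _ ≤ (B + n + 1) ^ n := pow_le_pow_right₀ hbase (zeta_le hx)
  calc |A k β n| ≤ ∑ x ∈ Omega k n, |(-1 : ℝ) ^ zeta x *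
        (∏ l ∈ Finset.range (zeta x), (β - l)) / ((pifact x : ℝ) * (k : ℝ) ^ zeta x)| :=
        Finset.abs_sum_le_sum_abs _ _
    _ ≤ (Omega k n).card • ((B + n + 1) ^ n) := Finset.sum_le_card_nsmul _ _ _ hterm
    _ = (Omega k n).card * (B + n + 1) ^ n := nsmul_eq_mul _ _

/-- The universal constant in the geometric bound for `A`. -/
noncomputable def D (k n : ℕ) : ℝ := ((Omega k n).card : ℝ) * 2 ^ ((n + 2) * n)

lemma D_nonneg (k n : ℕ) : 0 ≤ D k n := by rw [D]; positivity

lemma abs_A_le' {k : ℕ} (hk : 1 ≤ k) (n : ℕ) {β : ℝ} {r : ℕ} (hβ : |β| ≤ (r : ℝ) + 1) :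
    |A k β n| ≤ D k n * ((2 : ℝ) ^ n) ^ r := by
  have h0 := abs_A_le hk (by positivity : (0:ℝ) ≤ (r : ℝ) + 1) hβ n
  refine h0.trans ?_
  rw [D, mul_assoc]
  refine mul_le_mul_of_nonneg_left ?_ (Nat.cast_nonneg _)
  have h1 : ((r : ℝ) + 1 + n + 1) ≤ 2 ^ (r + n + 2) := by
    calc ((r : ℝ) + 1 + n + 1) = ((r + n + 2 : ℕ) : ℝ) := by push_cast; ring
      _ ≤ 2 ^ (r + n + 2) := by exact_mod_cast (Nat.lt_two_pow_self (n := r + n + 2)).le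
  calc ((r : ℝ) + 1 + n + 1) ^ n ≤ ((2 : ℝ) ^ (r + n + 2)) ^ n :=
        pow_le_pow_left₀ (by positivity) h1 n
    _ = 2 ^ ((n + 2) * n) * ((2 : ℝ) ^ n) ^ r := by
        rw [← pow_mul, ← pow_mul, ← pow_add]
        ring_nf

lemma norm_term_le {k : ℕ} (hk : 1 ≤ k) (n : ℕ) {β : ℕ → ℝ}
    (hβ : ∀ r : ℕ, |β r| ≤ (r : ℝ) + 1) (a : ℝ) (r : ℕ) :
    ‖(a ^ r / r.factorial) * A k (β r) n‖ ≤ D k n * ((|a| * 2 ^ n) ^ r / r.factorial) := by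
  rw [Real.norm_eq_abs, abs_mul, abs_div, abs_pow, Nat.abs_cast]
  calc |a| ^ r / r.factorial * |A k (β r) n|
      ≤ |a| ^ r / r.factorial * (D k n * ((2:ℝ) ^ n) ^ r) :=
        mul_le_mul_of_nonneg_left (abs_A_le' hk n (hβ r)) (by positivity)
    _ = D k n * ((|a| * 2 ^ n) ^ r / r.factorial) := by rw [mul_pow]; ring

lemma summable_term {k : ℕ} (hk : 1 ≤ k) (n : ℕ) {β : ℕ → ℝ}
    (hβ : ∀ r : ℕ, |β r| ≤ (r : ℝ) + 1) (a : ℝ) :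
    Summable (fun r : ℕ => (a ^ r / r.factorial) * A k (β r) n) :=
  Summable.of_norm_bounded
    ((Real.summable_pow_div_factorial (|a| * 2 ^ n)).mul_left (D k n))
    (norm_term_le hk n hβ a)

lemma qk_eq (k : ℕ) (lam α : ℝ) (n : ℕ) (t : ℝ) :
    qk k lam α n t =
      ∑' r : ℕ, ((-((k * lam) ^ α) * t) ^ r / r.factorial) * A k (α * r) n := rfl

lemma hbeta1 {α : ℝ} (hα0 : 0 < α) (hα1 : α ≤ 1) (r : ℕ) : |α * (r : ℝ)| ≤ (r : ℝ) + 1 := by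
  rw [abs_of_nonneg (by positivity)]
  have h : α * (r : ℝ) ≤ 1 * r := mul_le_mul_of_nonneg_right hα1 (Nat.cast_nonneg r)
  linarith

lemma hbeta2 {α : ℝ} (hα0 : 0 < α) (hα1 : α ≤ 1) (r : ℕ) :
    |α * ((r : ℝ) + 1)| ≤ (r : ℝ) + 1 := by
  rw [abs_of_nonneg (by positivity)]
  have h0 : (0:ℝ) ≤ (r : ℝ) + 1 := by positivity
  have h : α * ((r : ℝ) + 1) ≤ 1 * ((r:ℝ) + 1) := mul_le_mul_of_nonneg_right hα1 h0
  linarith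

lemma qk_hasDerivAt (k : ℕ) (hk : 1 ≤ k) (lam α : ℝ) (hα0 : 0 < α) (hα1 : α ≤ 1)
    (n : ℕ) (t : ℝ) :
    HasDerivAt (fun s => qk k lam α n s)
      (∑' r : ℕ, (-((k * lam) ^ α)) *
        (((-((k * lam) ^ α) * t) ^ r / r.factorial) * A k (α * ((r : ℝ) + 1)) n)) t := by
  set c : ℝ := (k * lam) ^ α with hc
  set R : ℝ := |t| + 1 with hR
  have htR : t ∈ Metric.ball (0 : ℝ) R := by
    simp only [Metric.mem_ball, Real.dist_eq, sub_zero, hR]; linarith [abs_nonneg t]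
  set g : ℕ → ℝ → ℝ := fun r s => ((-c * s) ^ r / r.factorial) * A k (α * r) n with hg_def
  set g' : ℕ → ℝ → ℝ := fun r s =>
    (((r : ℝ) * (-c * s) ^ (r - 1) * (-c)) / r.factorial) * A k (α * r) n with hg'_def
  set u : ℕ → ℝ := fun r =>
    (|c| * D k n) * ((2 * (1 + |c| * R) * 2 ^ n) ^ r / r.factorial) with hu_def
  have hu : Summable u := (Real.summable_pow_div_factorial _).mul_left _
  have hgd : ∀ (r : ℕ), ∀ s ∈ Metric.ball (0 : ℝ) R, HasDerivAt (g r) (g' r s) s := by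
    intro r s _
    have h1 : HasDerivAt (fun s : ℝ => (-c * s) ^ r) ((r : ℝ) * (-c * s) ^ (r - 1) * (-c)) s := by
      simpa [Function.comp_def] using (hasDerivAt_pow r (-c * s)).comp s ((hasDerivAt_id s).const_mul (-c))
    exact (h1.div_const (r.factorial : ℝ)).mul_const (A k (α * r) n)
  have hg' : ∀ (r : ℕ), ∀ s ∈ Metric.ball (0 : ℝ) R, ‖g' r s‖ ≤ u r := by
    intro r s hs
    have hsR : |s| ≤ R := by
      simp only [Metric.mem_ball, Real.dist_eq, sub_zero] at hs; linarith
    have hA : |A k (α * r) n| ≤ D k n * ((2:ℝ) ^ n) ^ r := abs_A_le' hk n (hbeta1 hα0 hα1 r)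
    have hb : |(-c) * s| ≤ 1 + |c| * R := by
      rw [abs_mul, abs_neg]
      have := mul_le_mul_of_nonneg_left hsR (abs_nonneg c)
      linarith
    have h2 : |(-c * s) ^ (r - 1)| ≤ (1 + |c| * R) ^ r := by
      rw [abs_pow]
      calc |(-c) * s| ^ (r - 1) ≤ (1 + |c| * R) ^ (r - 1) :=
            pow_le_pow_left₀ (abs_nonneg _) hb _
        _ ≤ (1 + |c| * R) ^ r := by
            refine pow_le_pow_right₀ ?_ (Nat.sub_le r 1)
            have : 0 ≤ |c| * R := by positivity
            linarith
    have hr2 : (r : ℝ) ≤ 2 ^ r := by exact_mod_cast (Nat.lt_two_pow_self (n := r)).le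
    have hnorm : ‖g' r s‖ =
        (r : ℝ) * |(-c * s) ^ (r - 1)| * |c| / r.factorial * |A k (α * r) n| := by
      simp only [hg'_def, Real.norm_eq_abs, abs_mul, abs_div, Nat.abs_cast, abs_neg, Nat.abs_cast]
    rw [hnorm]
    calc (r : ℝ) * |(-c * s) ^ (r - 1)| * |c| / r.factorial * |A k (α * r) n|
        ≤ (2:ℝ) ^ r * (1 + |c| * R) ^ r * |c| / r.factorial * (D k n * ((2:ℝ) ^ n) ^ r) := by
          gcongr
      _ = u r := by
          simp only [hu_def]
          rw [mul_pow, mul_pow]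
          ring
  have hg0 : Summable fun r => g r t := summable_term hk n (hbeta1 hα0 hα1) (-c * t)
  have hmain : HasDerivAt (fun z => ∑' r, g r z) (∑' r, g' r t) t :=
    hasDerivAt_tsum_of_isPreconnected hu Metric.isOpen_ball
      (convex_ball (0:ℝ) R).isPreconnected hgd hg' htR hg0 htR
  have hfun : (fun s => qk k lam α n s) = fun z => ∑' r, g r z := rfl
  rw [hfun]
  have hsum_g' : Summable fun r => g' r t := by
    refine Summable.of_norm_bounded hu (fun r => hg' r t htR)
  have hshift : (∑' r, g' r t) = ∑' r : ℕ,
      (-c) * (((-c * t) ^ r / r.factorial) * A k (α * ((r : ℝ) + 1)) n) := by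
    rw [Summable.tsum_eq_zero_add hsum_g']
    have h0 : g' 0 t = 0 := by simp [hg'_def]
    rw [h0, zero_add]
    refine tsum_congr fun r => ?_
    show (((r + 1 : ℕ) : ℝ) * (-c * t) ^ ((r + 1) - 1) * (-c)) / (r + 1).factorial *
        A k (α * ((r + 1 : ℕ) : ℝ)) n = _
    have hfac : ((r + 1).factorial : ℝ) = ((r : ℝ) + 1) * r.factorial := by
      rw [Nat.factorial_succ]; push_cast; ring
    have hcast : ((r + 1 : ℕ) : ℝ) = (r : ℝ) + 1 := by push_cast; ring
    rw [hcast, hfac]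
    have hne1 : ((r : ℝ) + 1) ≠ 0 := by positivity
    have hne2 : (r.factorial : ℝ) ≠ 0 := Nat.cast_ne_zero.mpr r.factorial_ne_zero
    simp only [Nat.add_sub_cancel]
    field_simp
  rw [← hshift]
  exact hmain

/-- The differential–difference equation governing the pmf of the space-fractional
Poisson process of order `k`:
`(d/dt) q_{α,k}(n,t) = −(kλ)^α ∑_{x, w(x) ≤ n} (−1)^{ζ(x)} (∏_{l<ζ(x)} (α − l)) /
(Π!(x) k^{ζ(x)}) · q_{α,k}(n − w(x), t)`, i.e. `(d/dt)q = −k^α λ^α (1 − (1/k)∑_j B^j)^α q`,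
the sum over tuples being grouped by their weight `m = w(x) ≤ n`. -/
theorem governing_equation_space_fractional_poisson_of_order_k
    (k : ℕ) (hk : 1 ≤ k) (lam α : ℝ) (hlam : 0 < lam) (hα : α ∈ Set.Ioo (0 : ℝ) 1)
    (n : ℕ) (t : ℝ) (ht : 0 < t) :
    deriv (fun s => qk k lam α n s) t =
      -((k * lam) ^ α) * ∑ m ∈ Finset.range (n + 1), ∑ x ∈ Omega k m,
        (-1 : ℝ) ^ zeta x * (∏ l ∈ Finset.range (zeta x), (α - l)) /
          ((pifact x : ℝ) * (k : ℝ) ^ zeta x) * qk k lam α (n - m) t := by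
  obtain ⟨hα0, hα1⟩ := hα
  rw [(qk_hasDerivAt k hk lam α hα0 hα1.le n t).deriv]
  have hstep1 : ∀ r : ℕ,
      (-((k * lam) ^ α)) * (((-((k * lam) ^ α) * t) ^ r / r.factorial) *
        A k (α * ((r : ℝ) + 1)) n) =
      ∑ m ∈ Finset.range (n + 1), ((-((k * lam) ^ α)) * A k α m) *
        (((-((k * lam) ^ α) * t) ^ r / r.factorial) * A k (α * r) (n - m)) := by
    intro r
    have h1 : α * ((r : ℝ) + 1) = α + α * r := by ring
    rw [h1, A_conv k α (α * r) n]
    rw [Finset.mul_sum, Finset.mul_sum]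
    exact Finset.sum_congr rfl fun m _ => by ring
  rw [tsum_congr hstep1]
  rw [Summable.tsum_finsetSum (fun m _ => ((summable_term hk (n - m) (hbeta1 hα0 hα1.le)
    (-((k * lam) ^ α) * t)).mul_left ((-((k * lam) ^ α)) * A k α m)))]
  rw [Finset.mul_sum]
  refine Finset.sum_congr rfl fun m hm => ?_
  rw [tsum_mul_left, ← qk_eq]
  rw [← Finset.sum_mul]
  show ((-((k * lam) ^ α)) * A k α m) * qk k lam α (n - m) t =
    -((k * lam) ^ α) * (A k α m * qk k lam α (n - m) t)
  ring
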